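/- Let k be a field containing F_q with a valuation ring o ⊂ k whose residue field is F_{q^d}, let O be an extension of o to a separable closure of k, and let D ∈ GL_n(o[[t]]) and Y ∈ GL_n(K[[t]]) satisfy D·φ_q(Y) = Y, where K is the completion of an algebraic closure of the completion of k and φ_q acts on coefficients by the q-power Frobenius. Then Y ∈ GL_n(O[[t]]); in particular every entry of every coefficient matrix of Y is separably algebraic over k and integral over O. -/

import Mathlib

open Submodule Set Module


lemma qpow_inj {K : Type*} [Field K] {q : ℕ} (hq : q ≠ 0)
    (hadd : ∀ a b : K, (a + b) ^ q = a ^ q + b ^ q) :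
    Function.Injective fun x : K => x ^ q := by
  intro a b hab
  simp only at hab
  have h := hadd (a - b) b
  rw [sub_add_cancel, hab, right_eq_add] at h
  exact sub_eq_zero.mp (pow_eq_zero_iff hq |>.mp h)

lemma qpow_span {F K : Type*} [Field F] [Field K] [Algebra F K] {q : ℕ} (hq : q ≠ 0)
    (hadd : ∀ a b : K, (a + b) ^ q = a ^ q + b ^ q) (S : Set K) {x : K}
    (hx : x ∈ span F S) : x ^ q ∈ span F ((· ^ q) '' S) := by
  induction hx using span_induction with
  | mem y hy => exact subset_span ⟨y, hy, rfl⟩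
  | zero => rw [zero_pow hq]; exact zero_mem _
  | add x y hx hy ihx ihy => rw [hadd]; exact add_mem ihx ihy
  | smul c x hx ih =>
      rw [Algebra.smul_def, mul_pow, ← map_pow, ← Algebra.smul_def]
      exact smul_mem _ _ ih

lemma claimQ {F K : Type*} [Field F] [Field K] [Algebra F K] {q : ℕ} (hq : q ≠ 0)
    (hadd : ∀ a b : K, (a + b) ^ q = a ^ q + b ^ q)
    {ι : Type*} [Fintype ι] (v : ι → K)
    (h1 : ∀ i, v i ^ q ∈ span F (Set.range v))
    (h2 : ∀ i, v i ∈ span F (Set.range fun i => v i ^ q))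
    {s : ℕ} (b : Fin s → K) (hbV : ∀ i, b i ∈ span F (Set.range v))
    (hb : LinearIndependent F b) :
    LinearIndependent F fun i => b i ^ q := by
  set V := span F (Set.range v) with hV
  have hVq : ∀ x ∈ V, x ^ q ∈ V := by
    intro x hx
    refine span_le.mpr ?_ (qpow_span hq hadd _ hx)
    rintro _ ⟨y, ⟨i, rfl⟩, rfl⟩
    exact h1 i
  obtain ⟨B, hBt, hbB, htB, hBind⟩ :=
    exists_linearIndepOn_id_extension hb.linearIndepOn_id
      (Set.subset_union_left (t := Set.range v))
  have hBfin : B.Finite := ((Set.finite_range b).union (Set.finite_range v)).subset hBt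
  haveI := hBfin.fintype
  have hrbV : Set.range b ⊆ ↑V := by rintro _ ⟨i, rfl⟩; exact hbV i
  have hspanB : span F B = V := by
    apply le_antisymm
    · exact span_le.mpr (hBt.trans (Set.union_subset hrbV subset_span))
    · exact span_le.mpr fun x hx => htB (Set.mem_union_right _ hx)
  have hcardB : finrank F (span F B) = Fintype.card B := by
    rw [finrank_span_set_eq_card hBind, Set.toFinset_card]
  set B' : Set K := (· ^ q) '' B with hB'
  haveI : Fintype B' := (hBfin.image _).fintype
  have hspanB' : span F B' = V := by
    apply le_antisymm
    · refine span_le.mpr ?_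
      rintro _ ⟨y, hy, rfl⟩
      exact hVq y (hspanB ▸ subset_span hy)
    · have h2' : V ≤ span F (Set.range fun i => v i ^ q) :=
        span_le.mpr (by rintro _ ⟨i, rfl⟩; exact h2 i)
      have h3 : span F (Set.range fun i => v i ^ q) ≤ span F B' := by
        refine span_le.mpr ?_
        rintro _ ⟨i, rfl⟩
        have hvi : v i ∈ span F B := by
          rw [hspanB]; exact subset_span (Set.mem_range_self i)
        exact qpow_span hq hadd B hvi
      exact h2'.trans h3
  have hcard' : Fintype.card B' = Fintype.card B :=
    Set.card_image_of_injective B (qpow_inj hq hadd)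
  have hB'ind : LinearIndependent F ((↑) : B' → K) := by
    rw [linearIndependent_iff_card_eq_finrank_span, Subtype.range_coe]
    show Fintype.card B' = Set.finrank F B'
    rw [Set.finrank, hspanB', ← hspanB, hcardB, hcard']
  have hmemB' : ∀ i, b i ^ q ∈ B' := fun i => ⟨b i, hbB (Set.mem_range_self i), rfl⟩
  have hinj : Function.Injective (fun i : Fin s => (⟨b i ^ q, hmemB' i⟩ : B')) := by
    intro i j hij
    exact hb.injective (qpow_inj hq hadd (congrArg Subtype.val hij))
  exact hB'ind.comp _ hinj

open Polynomial in
lemma lemA {F K : Type*} [Field F] [Field K] [Algebra F K] {q : ℕ} (hq : 1 < q)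
    (hq0 : (q : F) = 0)
    (hadd : ∀ a b : K, (a + b) ^ q = a ^ q + b ^ q)
    {ι : Type*} [Fintype ι] (v : ι → K)
    (h1 : ∀ i, v i ^ q ∈ span F (Set.range v))
    (h2 : ∀ i, v i ∈ span F (Set.range fun i => v i ^ q)) :
    ∀ x ∈ span F (Set.range v), IsSeparable F x := by
  classical
  have hq' : q ≠ 0 := by omega
  intro x hxV
  set V := span F (Set.range v) with hV
  have hVq : ∀ y ∈ V, y ^ q ∈ V := by
    intro y hy
    refine span_le.mpr ?_ (qpow_span hq' hadd _ hy)
    rintro _ ⟨z, ⟨i, rfl⟩, rfl⟩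
    exact h1 i
  haveI : FiniteDimensional F V := FiniteDimensional.span_of_finite F (Set.finite_range v)
  set g : ℕ → K := fun m => x ^ q ^ m with hg
  have hgV : ∀ m, g m ∈ V := by
    intro m
    induction m with
    | zero => simpa [hg] using hxV
    | succ m ih => have := hVq _ ih; rwa [hg, ← pow_mul, ← pow_succ] at this
  have hgq : ∀ m, g m ^ q = g (m + 1) := fun m => by
    rw [hg, ← pow_mul, ← pow_succ]
  -- there is a dependence among the g's
  have hex : ∃ m, ¬ LinearIndependent F fun i : Fin (m + 1) => g i := by
    refine ⟨finrank F V, fun hcon => ?_⟩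
    have hle : span F (Set.range fun i : Fin (finrank F V + 1) => g i) ≤ V :=
      span_le.mpr (by rintro _ ⟨i, rfl⟩; exact hgV i)
    have := Submodule.finrank_mono hle
    rw [finrank_span_eq_card hcon] at this
    simp at this
  obtain ⟨M, hMfail, hMmin⟩ : ∃ M, (¬ LinearIndependent F fun i : Fin (M + 1) => g i) ∧
      ∀ m' < M, LinearIndependent F fun i : Fin (m' + 1) => g i :=
    ⟨Nat.find hex, Nat.find_spec hex, fun m' hm' => of_not_not (Nat.find_min hex hm')⟩
  have hMok : LinearIndependent F fun i : Fin M => g i := by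
    rcases Nat.eq_zero_or_pos M with h0 | h0
    · subst h0
      exact linearIndependent_empty_type
    · obtain ⟨m, rfl⟩ : ∃ m, M = m + 1 := ⟨M - 1, by omega⟩
      exact hMmin m (by omega)
  have hsnoc : (fun i : Fin (M + 1) => g i) =
      Fin.snoc (fun i : Fin M => g i) (g M) := by
    funext i
    refine Fin.lastCases ?_ (fun j => ?_) i
    · rw [Fin.snoc_last]; rfl
    · rw [Fin.snoc_castSucc]; rfl
  rw [hsnoc, linearIndependent_fin_snoc, not_and_or] at hMfail
  have hmem : g M ∈ span F (Set.range fun i : Fin M => g i) := by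
    rcases hMfail with h | h
    · exact absurd hMok h
    · exact of_not_not h
  obtain ⟨c, hc⟩ := (mem_span_range_iff_exists_fun F).mp hmem
  -- case M = 0 : x = 0
  rcases Nat.eq_zero_or_pos M with hM0 | hM0
  · have hx0 : x = 0 := by
      rw [hM0] at hmem
      have : (Set.range fun i : Fin 0 => g i) = ∅ := Set.range_eq_empty _
      rw [this, span_empty, mem_bot] at hmem
      simpa [hg] using hmem
    rw [hx0]
    show (minpoly F (0 : K)).Separable
    rw [minpoly.zero]
    exact separable_X
  obtain ⟨m, rfl⟩ : ∃ m, M = m + 1 := ⟨M - 1, by omega⟩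
  have hc0 : c 0 ≠ 0 := by
    intro hc0
    -- build a nontrivial dependence among the q-powers of an independent family
    have hQ : LinearIndependent F fun i : Fin (m + 1) => g i ^ q :=
      claimQ hq' hadd v h1 h2 _ (fun i => hgV i) hMok
    set e : Fin (m + 1) → F := Fin.snoc (fun i : Fin m => c i.succ) (-1) with he
    have hsum : ∑ i, e i • g ↑i ^ q = 0 := by
      rw [Fin.sum_univ_castSucc]
      have h1' : ∀ i : Fin m, e i.castSucc • g ↑i.castSucc ^ q = c i.succ • g ↑i.succ := by
        intro i
        rw [he, Fin.snoc_castSucc, hgq]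
        rfl
      rw [Finset.sum_congr rfl fun i _ => h1' i]
      have h2' : e (Fin.last m) • g ↑(Fin.last m) ^ q = -g (m + 1) := by
        rw [he, Fin.snoc_last, hgq, neg_smul, one_smul]
        rfl
      rw [h2']
      have := hc
      rw [Fin.sum_univ_succ, hc0, zero_smul, zero_add] at this
      rw [this]
      simp
    have := Fintype.linearIndependent_iff.mp hQ e hsum (Fin.last m)
    rw [he, Fin.snoc_last] at this
    exact absurd this (by norm_num)
  -- now the separable polynomial
  set f : F[X] := X ^ q ^ (m + 1) - ∑ i : Fin (m + 1), C (c i) * X ^ q ^ (i : ℕ) with hf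
  have haev : aeval x f = 0 := by
    rw [hf, map_sub, map_sum, map_pow, aeval_X]
    have : ∀ i : Fin (m + 1), aeval x (C (c i) * X ^ q ^ (i : ℕ)) = c i • g ↑i := by
      intro i
      rw [map_mul, map_pow, aeval_X, aeval_C, Algebra.smul_def]
    rw [Finset.sum_congr rfl fun i _ => this i, hc]
    exact sub_self _
  have hqm0 : ∀ j : ℕ, j ≠ 0 → ((q ^ j : ℕ) : F) = 0 := by
    intro j hj
    rw [Nat.cast_pow, hq0, zero_pow hj]
  have hderiv : derivative f = C (-(c 0)) := by
    rw [hf, map_sub, derivative_X_pow, hqm0 (m + 1) (by omega), map_zero, zero_mul, map_sum]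
    have hterm : ∀ i : Fin (m + 1), derivative (C (c i) * X ^ q ^ (i : ℕ)) =
        if i = 0 then C (c i) else 0 := by
      intro i
      rw [derivative_C_mul, derivative_X_pow]
      rcases eq_or_ne i 0 with h0 | h0
      · subst h0; simp
      · rw [hqm0 _ (fun h => h0 (Fin.ext (by rw [h]; simp))), map_zero, zero_mul, mul_zero, if_neg h0]
    rw [Finset.sum_congr rfl fun i _ => hterm i, Fintype.sum_ite_eq' (0 : Fin (m + 1))
      (fun i => C (c i)), zero_sub, ← map_neg]
  have hsep : f.Separable := by
    refine ⟨0, C (-(c 0))⁻¹, ?_⟩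
    rw [hderiv, zero_mul, zero_add, ← map_mul, inv_mul_cancel₀ (neg_ne_zero.mpr hc0), map_one]
  exact hsep.of_dvd (minpoly.dvd F x haev)

lemma lemB {L : Type*} [Field L] (O : ValuationSubring L) {q : ℕ} (hq : 1 < q)
    {ι : Type*} [Fintype ι] (w : ι → L)
    (h : ∀ i, ∃ c : ι → L, (∀ t, c t ∈ O) ∧ w i ^ q = ∑ t, c t * w t) :
    ∀ i, w i ∈ O := by
  rcases isEmpty_or_nonempty ι with hι | hι
  · exact fun i => isEmptyElim i
  obtain ⟨i₀, -, hmax⟩ := Finset.exists_max_image Finset.univ (fun i => O.valuation (w i))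
    ⟨Classical.arbitrary ι, Finset.mem_univ _⟩
  suffices hv : O.valuation (w i₀) ≤ 1 by
    intro i
    exact O.mem_of_valuation_le_one _ ((hmax i (Finset.mem_univ i)).trans hv)
  obtain ⟨c, hcO, hrel⟩ := h i₀
  have hle : O.valuation (w i₀) ^ q ≤ O.valuation (w i₀) := by
    rw [← map_pow, hrel]
    refine Valuation.map_sum_le _ fun t _ => ?_
    rw [map_mul]
    calc O.valuation (c t) * O.valuation (w t)
        ≤ 1 * O.valuation (w i₀) :=
          mul_le_mul' (O.valuation_le_one ⟨c t, hcO t⟩) (hmax t (Finset.mem_univ t))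
      _ = O.valuation (w i₀) := one_mul _
  by_contra hgt
  rw [not_le] at hgt
  have : O.valuation (w i₀) < O.valuation (w i₀) ^ q := by
    conv_lhs => rw [← pow_one (O.valuation (w i₀))]
    exact pow_lt_pow_right₀ hgt hq
  exact absurd (this.trans_le hle) (lt_irrefl _)

lemma matstep {K : Type*} [Field K] {n : ℕ} (A : Matrix (Fin n) (Fin n) K)
    (hA : IsUnit A.det) (w z g : Fin n → K)
    (h : ∀ i, z i = g i + A.mulVec w i) :
    ∀ r, w r = ∑ i, A⁻¹ r i * (z i - g i) := by
  have hv : A.mulVec w = z - g := by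
    funext i
    rw [Pi.sub_apply, h i, add_sub_cancel_left]
  have hww : A⁻¹.mulVec (A.mulVec w) = w := by
    rw [Matrix.mulVec_mulVec, Matrix.nonsing_inv_mul _ hA, Matrix.one_mulVec]
  intro r
  conv_lhs => rw [← hww, hv]
  simp [Matrix.mulVec, dotProduct, mul_sub, Finset.sum_sub_distrib]

lemma mul_mem_span {K : Type*} [Field K] (R : Subring K) {c x : K} (hc : c ∈ R)
    {S : Set K} (hx : x ∈ Submodule.span R S) : c * x ∈ Submodule.span R S := by
  have h : c * x = (⟨c, hc⟩ : R) • x := by rw [Subring.smul_def, smul_eq_mul]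
  rw [h]; exact Submodule.smul_mem _ _ hx

lemma span_subring_le {k K : Type*} [Field k] [Field K] [Algebra k K]
    (R : Subring K) (h : ∀ c : K, c ∈ R → ∃ c₀ : k, algebraMap k K c₀ = c)
    (S : Set K) {x : K} (hx : x ∈ Submodule.span R S) : x ∈ Submodule.span k S := by
  induction hx using Submodule.span_induction with
  | mem y hy => exact Submodule.subset_span hy
  | zero => exact zero_mem _
  | add a b _ _ iha ihb => exact add_mem iha ihb
  | smul c y _ ih =>
      obtain ⟨c₀, hc₀⟩ := h c c.2
      rw [Subring.smul_def, smul_eq_mul, ← hc₀, ← Algebra.smul_def]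
      exact Submodule.smul_mem _ _ ih

set_option maxHeartbeats 1000000 in
set_option synthInstance.maxHeartbeats 200000 in
theorem stmt10 (p e d : ℕ) [Fact p.Prime] (he : e ≠ 0) (hd : d ≠ 0)
    {k : Type*} [Field k] [CharP k p] (ι : GaloisField p e →+* k)
    {K : Type*} [Field K] [Algebra k K] [IsAlgClosed K] [ExpChar K p]
    (o : ValuationSubring k)
    (hres : Nat.card (IsLocalRing.ResidueField o) = (p ^ e) ^ d)
    (O : ValuationSubring (separableClosure k K))
    (hO : ∀ x : k, x ∈ o ↔ algebraMap k (separableClosure k K) x ∈ O)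
    {n : ℕ} (D : Matrix (Fin n) (Fin n) (PowerSeries k))
    (hDo : ∀ l i j, PowerSeries.coeff (R := k) l (D i j) ∈ o)
    (hDdet : ∃ u : oˣ, ((u : o) : k) = (D.map (PowerSeries.constantCoeff (R := k))).det)
    (Y : Matrix (Fin n) (Fin n) (PowerSeries K)) (hY : IsUnit Y.det)
    (hfund : D.map (PowerSeries.map (algebraMap k K)) *
        Y.map (PowerSeries.map (iterateFrobenius K p e)) = Y) :
    (∀ l i j, ∃ y : O, algebraMap (separableClosure k K) K (y : separableClosure k K) =
      PowerSeries.coeff (R := K) l (Y i j)) ∧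
    ∃ u : Oˣ, algebraMap (separableClosure k K) K ((u : O) : separableClosure k K) =
      (Y.map (PowerSeries.constantCoeff (R := K))).det := by
  classical
  have hp : p.Prime := Fact.out
  have hq1 : 1 < p ^ e := Nat.one_lt_pow he hp.one_lt
  have hq' : p ^ e ≠ 0 := by positivity
  haveI : CharP K p := charP_of_injective_algebraMap (algebraMap k K).injective p
  have hqk0 : ((p ^ e : ℕ) : k) = 0 := by
    rw [Nat.cast_pow, CharP.cast_eq_zero k p, zero_pow he]
  have hadd : ∀ a b : K, (a + b) ^ p ^ e = a ^ p ^ e + b ^ p ^ e := fun a b => by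
    simpa [iterateFrobenius_def] using map_add (iterateFrobenius K p e) a b
  -- the coefficient equations
  have E : ∀ (l : ℕ) (i j : Fin n),
      PowerSeries.coeff (R := K) l (Y i j) =
        ∑ m ∈ Finset.range (l + 1), ∑ r, algebraMap k K (PowerSeries.coeff (R := k) m (D i r)) *
          (PowerSeries.coeff (R := K) (l - m) (Y r j)) ^ p ^ e := by
    intro l i j
    conv_lhs => rw [← hfund]
    rw [Matrix.mul_apply, map_sum]
    have step : ∀ r, PowerSeries.coeff (R := K) l ((D.map (PowerSeries.map (algebraMap k K))) i r *
        (Y.map (PowerSeries.map (iterateFrobenius K p e))) r j) =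
        ∑ m ∈ Finset.range (l + 1), algebraMap k K (PowerSeries.coeff (R := k) m (D i r)) *
          (PowerSeries.coeff (R := K) (l - m) (Y r j)) ^ p ^ e := by
      intro r
      rw [PowerSeries.coeff_mul, Finset.Nat.sum_antidiagonal_eq_sum_range_succ_mk]
      refine Finset.sum_congr rfl fun m _ => ?_
      rw [Matrix.map_apply, Matrix.map_apply, PowerSeries.coeff_map, PowerSeries.coeff_map,
        iterateFrobenius_def]
    rw [Finset.sum_congr rfl fun r _ => step r, Finset.sum_comm]
  -- the subring of K generated by the image of o
  set OK : Subring K := o.toSubring.map ((algebraMap k K) : k →+* K) with hOKdef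
  have hmemOK : ∀ x : k, x ∈ o → algebraMap k K x ∈ OK := fun x hx => ⟨x, hx, rfl⟩
  have hOKdown : ∀ c : K, c ∈ OK → ∃ c₀ : k, c₀ ∈ o ∧ algebraMap k K c₀ = c := by
    intro c hc
    obtain ⟨c₀, hc₀, hcc⟩ := hc
    exact ⟨c₀, hc₀, hcc⟩
  -- the constant-term matrix of D over K and its inverse
  obtain ⟨u, hu⟩ := hDdet
  set A : Matrix (Fin n) (Fin n) K :=
    fun i r => algebraMap k K (PowerSeries.coeff (R := k) 0 (D i r)) with hA
  have hAeq : A = (D.map (PowerSeries.constantCoeff (R := k))).map (algebraMap k K) := by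
    ext i r
    simp only [hA, Matrix.map_apply, PowerSeries.coeff_zero_eq_constantCoeff_apply]
  have hAdet : A.det = algebraMap k K ((u : o) : k) := by
    rw [hAeq, ← RingHom.mapMatrix_apply, ← RingHom.map_det, ← hu]
  have huu : ((u : o) : k) * (((u⁻¹ : oˣ) : o) : k) = 1 := by
    have h1 : (u : o) * ((u⁻¹ : oˣ) : o) = 1 := by
      rw [← Units.val_mul, mul_inv_cancel, Units.val_one]
    calc ((u : o) : k) * (((u⁻¹ : oˣ) : o) : k) = (((u : o) * ((u⁻¹ : oˣ) : o) : o) : k) := by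
          push_cast; ring
      _ = 1 := by rw [h1]; rfl
  have hAdetU : IsUnit A.det := by
    refine IsUnit.of_mul_eq_one (algebraMap k K (((u⁻¹ : oˣ) : o) : k)) ?_
    rw [hAdet, ← map_mul, huu, map_one]
  have hAinvO : ∀ r i, A⁻¹ r i ∈ OK := by
    intro r i
    rw [Matrix.inv_def]
    have hinv : Ring.inverse A.det = algebraMap k K (((u⁻¹ : oˣ) : o) : k) := by
      rw [Ring.inverse_eq_inv']
      refine inv_eq_of_mul_eq_one_right ?_
      rw [hAdet, ← map_mul, huu, map_one]
    set AO : Matrix (Fin n) (Fin n) OK :=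
      fun i r => ⟨algebraMap k K (PowerSeries.coeff (R := k) 0 (D i r)),
        hmemOK _ (hDo 0 i r)⟩ with hAO
    have hAeq2 : A = AO.map (OK.subtype) := by ext i' r'; rfl
    have hadj : A.adjugate r i ∈ OK := by
      rw [hAeq2, ← RingHom.mapMatrix_apply, ← RingHom.map_adjugate, RingHom.mapMatrix_apply,
        Matrix.map_apply]
      exact (AO.adjugate r i).2
    rw [Matrix.smul_apply, hinv, smul_eq_mul]
    exact mul_mem (hmemOK _ (u⁻¹ : oˣ).val.2) hadj
  -- the key recursion: q-th powers of coefficients lie in the o-span of coefficients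
  have claimRo : ∀ l (r j : Fin n), (PowerSeries.coeff (R := K) l (Y r j)) ^ p ^ e ∈
      Submodule.span OK (Set.range fun mi : Fin (l + 1) × Fin n =>
        PowerSeries.coeff (R := K) (mi.1 : ℕ) (Y mi.2 j)) := by
    intro l
    induction l using Nat.strong_induction_on with
    | _ l IH =>
    intro r j
    have hz : ∀ i, PowerSeries.coeff (R := K) l (Y i j) =
        (∑ m ∈ Finset.range l, ∑ s, algebraMap k K (PowerSeries.coeff (R := k) (m + 1) (D i s)) *
          (PowerSeries.coeff (R := K) (l - (m + 1)) (Y s j)) ^ p ^ e) +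
        A.mulVec (fun s => (PowerSeries.coeff (R := K) l (Y s j)) ^ p ^ e) i := by
      intro i
      rw [E l i j, Finset.sum_range_succ']
      congr 1
    have hw := matstep A hAdetU _ _ _ hz r
    rw [hw]
    refine Submodule.sum_mem _ fun i _ => ?_
    refine mul_mem_span OK (hAinvO r i) (sub_mem ?_ ?_)
    · exact Submodule.subset_span ⟨(⟨l, by omega⟩, i), rfl⟩
    · refine Submodule.sum_mem _ fun m hm => ?_
      refine Submodule.sum_mem _ fun s _ => ?_
      refine mul_mem_span OK (hmemOK _ (hDo (m + 1) i s)) ?_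
      have hlt : l - (m + 1) < l := by
        have := Finset.mem_range.mp hm; omega
      refine Submodule.span_mono ?_ (IH _ hlt s j)
      rintro _ ⟨mi, rfl⟩
      refine ⟨(⟨(mi.1 : ℕ), by have := mi.1.isLt; omega⟩, mi.2), rfl⟩
  -- Stage 1: all coefficients are separable over k
  have hsep : ∀ l (i j : Fin n), PowerSeries.coeff (R := K) l (Y i j) ∈ separableClosure k K := by
    intro l i j
    rw [mem_separableClosure_iff]
    set v : Fin (l + 1) × Fin n → K :=
      fun mi => PowerSeries.coeff (R := K) (mi.1 : ℕ) (Y mi.2 j) with hv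
    have h1 : ∀ mi, v mi ^ p ^ e ∈ span k (Set.range v) := by
      intro mi
      refine span_subring_le OK (fun c hc => ?_) _
        (Submodule.span_mono ?_ (claimRo (mi.1 : ℕ) mi.2 j))
      · obtain ⟨c₀, _, hcc⟩ := hOKdown c hc
        exact ⟨c₀, hcc⟩
      · rintro _ ⟨mi', rfl⟩
        exact ⟨(⟨(mi'.1 : ℕ), by have := mi'.1.isLt; have := mi.1.isLt; omega⟩, mi'.2), rfl⟩
    have h2 : ∀ mi, v mi ∈ span k (Set.range fun mi => v mi ^ p ^ e) := by
      intro mi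
      have hEv := E (mi.1 : ℕ) mi.2 j
      rw [hv]
      simp only
      rw [hEv]
      refine Submodule.sum_mem _ fun m hm => ?_
      refine Submodule.sum_mem _ fun s _ => ?_
      rw [← Algebra.smul_def]
      refine Submodule.smul_mem _ _ (Submodule.subset_span ?_)
      exact ⟨(⟨(mi.1 : ℕ) - m, by have := mi.1.isLt; omega⟩, s), rfl⟩
    have := lemA hq1 hqk0 hadd v h1 h2 _ (Submodule.subset_span ⟨(⟨l, by omega⟩, i), rfl⟩)
    exact this
  -- Stage 2: integrality over O
  have hinj' : Function.Injective (algebraMap (separableClosure k K) K) :=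
    (algebraMap (separableClosure k K) K).injective
  set yh : ℕ → Fin n → Fin n → separableClosure k K :=
    fun l i j => ⟨PowerSeries.coeff (R := K) l (Y i j), hsep l i j⟩ with hyh
  have hyval : ∀ l i j, algebraMap (separableClosure k K) K (yh l i j) =
      PowerSeries.coeff (R := K) l (Y i j) := fun l i j => rfl
  have hInO : ∀ l (i j : Fin n), yh l i j ∈ O := by
    intro l i j
    have hall := lemB O hq1 (fun mi : Fin (l + 1) × Fin n => yh (mi.1 : ℕ) mi.2 j) ?_
    · exact hall (⟨l, by omega⟩, i)
    · intro mi
      have hsp : (PowerSeries.coeff (R := K) (mi.1 : ℕ) (Y mi.2 j)) ^ p ^ e ∈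
          Submodule.span OK (Set.range fun t : Fin (l + 1) × Fin n =>
            PowerSeries.coeff (R := K) (t.1 : ℕ) (Y t.2 j)) := by
        refine Submodule.span_mono ?_ (claimRo (mi.1 : ℕ) mi.2 j)
        rintro _ ⟨t, rfl⟩
        exact ⟨(⟨(t.1 : ℕ), by have := t.1.isLt; have := mi.1.isLt; omega⟩, t.2), rfl⟩
      obtain ⟨c, hc⟩ := (mem_span_range_iff_exists_fun OK).mp hsp
      have hlift : ∀ t : Fin (l + 1) × Fin n, ∃ ch : separableClosure k K, ch ∈ O ∧
          algebraMap (separableClosure k K) K ch = (c t : K) := by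
        intro t
        obtain ⟨c₀, hc₀, hcc⟩ := hOKdown _ (c t).2
        refine ⟨algebraMap k (separableClosure k K) c₀, (hO c₀).mp hc₀, ?_⟩
        rw [← IsScalarTower.algebraMap_apply k (separableClosure k K) K, hcc]
      choose ch hchO hchval using hlift
      refine ⟨ch, hchO, ?_⟩
      apply hinj'
      rw [map_pow, hyval, map_sum, ← hc]
      refine Finset.sum_congr rfl fun t _ => ?_
      rw [map_mul, hchval, hyval, Subring.smul_def, smul_eq_mul]
  refine ⟨fun l i j => ⟨⟨yh l i j, hInO l i j⟩, rfl⟩, ?_⟩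
  -- the determinant of the constant term, as a unit of O
  have hc0fund := congrArg (fun M : Matrix (Fin n) (Fin n) (PowerSeries K) =>
      M.map (PowerSeries.constantCoeff (R := K))) hfund
  simp only [Matrix.map_mul] at hc0fund
  have hfac1 : (D.map (PowerSeries.map (algebraMap k K))).map
      (PowerSeries.constantCoeff (R := K)) = A := by
    ext i r
    simp only [Matrix.map_apply, hA, ← PowerSeries.coeff_zero_eq_constantCoeff_apply,
      PowerSeries.coeff_map]
  have hfac2 : (Y.map (PowerSeries.map (iterateFrobenius K p e))).map
      (PowerSeries.constantCoeff (R := K)) =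
      (Y.map (PowerSeries.constantCoeff (R := K))).map (iterateFrobenius K p e) := by
    ext i r
    simp only [Matrix.map_apply, ← PowerSeries.coeff_zero_eq_constantCoeff_apply,
      PowerSeries.coeff_map]
  rw [hfac1, hfac2] at hc0fund
  have hdet := congrArg Matrix.det hc0fund
  rw [Matrix.det_mul, ← RingHom.mapMatrix_apply, ← RingHom.map_det, hAdet,
    iterateFrobenius_def] at hdet
  -- hdet : algebraMap k K u * (Y.map constantCoeff).det ^ p ^ e = (Y.map constantCoeff).det
  have hdK0 : (Y.map (PowerSeries.constantCoeff (R := K))).det ≠ 0 := by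
    have h1 := PowerSeries.isUnit_constantCoeff Y.det hY
    rw [RingHom.map_det, RingHom.mapMatrix_apply] at h1
    exact h1.ne_zero
  -- the determinant over the separable closure
  set dO' : separableClosure k K := (Matrix.of fun i j => yh 0 i j).det with hdO'
  have hd : algebraMap (separableClosure k K) K dO' =
      (Y.map (PowerSeries.constantCoeff (R := K))).det := by
    rw [hdO', RingHom.map_det, RingHom.mapMatrix_apply]
    congr 1
    ext i j
    simp only [Matrix.map_apply, Matrix.of_apply, hyval]
    exact PowerSeries.coeff_zero_eq_constantCoeff_apply (Y i j)
  have hdO'mem : dO' ∈ O := by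
    have h2 := RingHom.map_det O.subtype (Matrix.of fun i j => (⟨yh 0 i j, hInO 0 i j⟩ : O))
    rw [RingHom.mapMatrix_apply] at h2
    have h3 : (Matrix.of fun i j => (⟨yh 0 i j, hInO 0 i j⟩ : O)).map O.subtype =
        Matrix.of fun i j => yh 0 i j := by ext i j; rfl
    rw [h3] at h2
    rw [hdO', ← h2]
    exact SetLike.coe_mem _
  have hd0' : dO' ≠ 0 := fun h0 => hdK0 (by rw [← hd, h0, map_zero])
  set c' : separableClosure k K := algebraMap k (separableClosure k K) ((u : o) : k) with hc'
  have hc'O : c' ∈ O := (hO _).mp (u : o).2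
  have hdet' : c' * dO' ^ p ^ e = dO' := by
    apply hinj'
    rw [map_mul, map_pow, hd, hc', ← IsScalarTower.algebraMap_apply k (separableClosure k K) K]
    exact hdet
  have hkey : c' * dO' ^ (p ^ e - 1) = 1 := by
    refine mul_right_cancel₀ hd0' ?_
    rw [one_mul, mul_assoc, ← pow_succ]
    have h4 : p ^ e - 1 + 1 = p ^ e := by omega
    rw [h4, hdet']
  have hpow : dO' * dO' ^ (p ^ e - 2) = dO' ^ (p ^ e - 1) := by
    rw [← pow_succ']
    congr 1
    omega
  have hmulO : (⟨dO', hdO'mem⟩ : O) * (⟨c', hc'O⟩ * ⟨dO', hdO'mem⟩ ^ (p ^ e - 2)) = 1 := by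
    apply Subtype.ext
    show dO' * (c' * dO' ^ (p ^ e - 2)) = 1
    rw [mul_comm c', ← mul_assoc, hpow, mul_comm, hkey]
  exact ⟨Units.mkOfMulEqOne _ _ hmulO, by rw [Units.val_mkOfMulEqOne]; exact hd⟩
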